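/- Let T ∈ ℝ, let a, b, σ be positive real constants and let γ ≥ 0. Then for every t ≤ T, the map ψ ↦ Φ(t,T;ψ,γ) is differentiable on (0,∞) and has a right derivative at ψ = 0, and for every ψ ≥ 0 this (right) derivative equals exp( − ∫ₜ^T ( σ²·Φ(u,T;ψ,γ) + a ) du ). -/

import Mathlib

/-- k(x) := √(a² + 2(1+b·x)·σ²). -/
noncomputable def kfun (a b σ x : ℝ) : ℝ := Real.sqrt (a ^ 2 + 2 * (1 + b * x) * σ ^ 2)

/-- The explicit solution Φ(t,T;ψ,γ) of the Riccati equation with constant coefficient γ. -/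
noncomputable def Phi (a b σ ψ γ T t : ℝ) : ℝ :=
  ((kfun a b σ γ - a) / σ ^ 2 * (ψ + (a + kfun a b σ γ) / σ ^ 2) +
      (a + kfun a b σ γ) / σ ^ 2 * (ψ + (a - kfun a b σ γ) / σ ^ 2) *
        Real.exp (-(kfun a b σ γ) * (T - t))) /
    ((ψ + (a + kfun a b σ γ) / σ ^ 2) +
      ((kfun a b σ γ - a) / σ ^ 2 - ψ) * Real.exp (-(kfun a b σ γ) * (T - t)))

/-- for each t ≤ T the map ψ ↦ Φ(t,T;ψ,γ) is differentiable on (0,∞)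
and right-differentiable at 0, and for every ψ ≥ 0 the (right) derivative equals
exp(−∫ₜ^T (σ²·Φ(u,T;ψ,γ) + a) du). -/
lemma Phi_main
    (T a b σ γ : ℝ) (ha : 0 < a) (hb : 0 < b) (hσ : 0 < σ) (hγ : 0 ≤ γ)
    (t : ℝ) (ht : t ≤ T) (ψ : ℝ) (hψ : 0 ≤ ψ) :
    HasDerivAt (fun p => Phi a b σ p γ T t)
        (Real.exp (-∫ u in t..T, (σ ^ 2 * Phi a b σ ψ γ T u + a))) ψ := by
  have hσ2 : (0:ℝ) < σ ^ 2 := by positivity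
  set k := kfun a b σ γ with hkdef
  have hak : a < k := by
    have h1 : a = Real.sqrt (a ^ 2) := (Real.sqrt_sq ha.le).symm
    rw [h1, hkdef, kfun]
    exact Real.sqrt_lt_sqrt (by positivity) (by nlinarith [mul_pos (by nlinarith : (0:ℝ) < 1 + b * γ) hσ2])
  have hk : 0 < k := ha.trans hak
  -- positivity of the denominator
  have hDenpos : ∀ u ≤ T,
      0 < (ψ + (a + k) / σ ^ 2) + ((k - a) / σ ^ 2 - ψ) * Real.exp (-k * (T - u)) := by
    intro u hu
    have hE0 : 0 < Real.exp (-k * (T - u)) := Real.exp_pos _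
    have hE1 : Real.exp (-k * (T - u)) ≤ 1 := by
      have : Real.exp (-k * (T - u)) ≤ Real.exp 0 := Real.exp_le_exp.2 (by nlinarith)
      simpa using this
    have h1 : 0 < (a + k) / σ ^ 2 := by positivity
    have h2 : 0 ≤ (k - a) / σ ^ 2 := div_nonneg (by linarith) hσ2.le
    nlinarith [mul_nonneg hψ (sub_nonneg.2 hE1), mul_nonneg h2 hE0.le]
  have hDt : 0 < (ψ + (a + k) / σ ^ 2) + ((k - a) / σ ^ 2 - ψ) * Real.exp (-k * (T - t)) :=
    hDenpos t ht
  -- derivative of Phi in ψ (Möbius quotient rule)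
  have hNum : HasDerivAt (fun p : ℝ =>
      (k - a) / σ ^ 2 * (p + (a + k) / σ ^ 2) +
        (a + k) / σ ^ 2 * (p + (a - k) / σ ^ 2) * Real.exp (-k * (T - t)))
      ((k - a) / σ ^ 2 + (a + k) / σ ^ 2 * Real.exp (-k * (T - t))) ψ := by
    have h : (fun p : ℝ =>
        (k - a) / σ ^ 2 * (p + (a + k) / σ ^ 2) +
          (a + k) / σ ^ 2 * (p + (a - k) / σ ^ 2) * Real.exp (-k * (T - t)))
        = fun p => ((k - a) / σ ^ 2 + (a + k) / σ ^ 2 * Real.exp (-k * (T - t))) * p +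
            ((k - a) / σ ^ 2 * ((a + k) / σ ^ 2) +
              (a + k) / σ ^ 2 * ((a - k) / σ ^ 2) * Real.exp (-k * (T - t))) := by
      funext p; ring
    rw [h]
    simpa using ((hasDerivAt_id ψ).const_mul
      ((k - a) / σ ^ 2 + (a + k) / σ ^ 2 * Real.exp (-k * (T - t)))).add_const
        ((k - a) / σ ^ 2 * ((a + k) / σ ^ 2) +
          (a + k) / σ ^ 2 * ((a - k) / σ ^ 2) * Real.exp (-k * (T - t)))
  have hDen : HasDerivAt (fun p : ℝ =>
      (p + (a + k) / σ ^ 2) + ((k - a) / σ ^ 2 - p) * Real.exp (-k * (T - t)))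
      (1 - Real.exp (-k * (T - t))) ψ := by
    have h : (fun p : ℝ =>
        (p + (a + k) / σ ^ 2) + ((k - a) / σ ^ 2 - p) * Real.exp (-k * (T - t)))
        = fun p => (1 - Real.exp (-k * (T - t))) * p +
            ((a + k) / σ ^ 2 + (k - a) / σ ^ 2 * Real.exp (-k * (T - t))) := by
      funext p; ring
    rw [h]
    simpa using ((hasDerivAt_id ψ).const_mul (1 - Real.exp (-k * (T - t)))).add_const
      ((a + k) / σ ^ 2 + (k - a) / σ ^ 2 * Real.exp (-k * (T - t)))
  have hDiv := hNum.div hDen (ne_of_gt hDt)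
  convert hDiv using 1
  · rfl
  · rfl
  · rfl
  -- now compute the integral
  have huT : ∀ u ∈ Set.uIcc t T, u ≤ T := by
    intro u hu
    rw [Set.uIcc_of_le ht] at hu
    exact hu.2
  have hF : ∀ u ∈ Set.uIcc t T, HasDerivAt
      (fun v => k * v - 2 * Real.log ((ψ + (a + k) / σ ^ 2) +
        ((k - a) / σ ^ 2 - ψ) * Real.exp (-k * (T - v))))
      (σ ^ 2 * Phi a b σ ψ γ T u + a) u := by
    intro u hu
    have hg : HasDerivAt (fun v : ℝ => -k * (T - v)) k u := by
      have h : (fun v : ℝ => -k * (T - v)) = fun v => k * v - k * T := by funext v; ring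
      rw [h]
      simpa using ((hasDerivAt_id u).const_mul k).sub_const (k * T)
    have hE := hg.exp
    have hDenu : HasDerivAt (fun v => (ψ + (a + k) / σ ^ 2) +
        ((k - a) / σ ^ 2 - ψ) * Real.exp (-k * (T - v)))
        (((k - a) / σ ^ 2 - ψ) * (Real.exp (-k * (T - u)) * k)) u :=
      (hE.const_mul ((k - a) / σ ^ 2 - ψ)).const_add _
    have hlog := hDenu.log (ne_of_gt (hDenpos u (huT u hu)))
    have hlin : HasDerivAt (fun v : ℝ => k * v) k u := by
      simpa using (hasDerivAt_id u).const_mul k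
    have hFu := hlin.sub (hlog.const_mul 2)
    convert hFu using 1
    · rfl
    · rfl
    · rfl
    rw [Phi, ← hkdef]
    have h0 := ne_of_gt (hDenpos u (huT u hu))
    set Ex := Real.exp (-k * (T - u)) with hEx
    set D := ψ + (a + k) / σ ^ 2 + ((k - a) / σ ^ 2 - ψ) * Ex with hDdef
    field_simp [h0]
    rw [hDdef]
    field_simp
    ring
  have hcont : ContinuousOn (fun u => σ ^ 2 * Phi a b σ ψ γ T u + a) (Set.uIcc t T) := by
    apply ContinuousOn.add _ continuousOn_const
    apply continuousOn_const.mul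
    unfold Phi
    apply ContinuousOn.div
    · fun_prop
    · fun_prop
    · intro u hu
      exact ne_of_gt (hDenpos u (huT u hu))
  have hI := intervalIntegral.integral_eq_sub_of_hasDerivAt hF (hcont.intervalIntegrable)
  rw [hI]
  have hDT : (ψ + (a + k) / σ ^ 2) + ((k - a) / σ ^ 2 - ψ) * Real.exp (-k * (T - T))
      = 2 * k / σ ^ 2 := by
    rw [show -k * (T - T) = 0 by ring, Real.exp_zero]
    field_simp
    ring
  rw [hDT]
  have expand : -((k * T - 2 * Real.log (2 * k / σ ^ 2)) -
        (k * t - 2 * Real.log ((ψ + (a + k) / σ ^ 2) +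
          ((k - a) / σ ^ 2 - ψ) * Real.exp (-k * (T - t)))))
      = (-k * (T - t)) + Real.log ((2 * k / σ ^ 2) ^ 2) +
        Real.log ((((ψ + (a + k) / σ ^ 2) +
          ((k - a) / σ ^ 2 - ψ) * Real.exp (-k * (T - t))) ^ 2)⁻¹) := by
    rw [Real.log_inv, Real.log_pow, Real.log_pow]
    push_cast
    ring
  rw [expand, Real.exp_add, Real.exp_add,
    Real.exp_log (by positivity : (0:ℝ) < (2 * k / σ ^ 2) ^ 2),
    Real.exp_log (by positivity : (0:ℝ) < (((ψ + (a + k) / σ ^ 2) +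
      ((k - a) / σ ^ 2 - ψ) * Real.exp (-k * (T - t))) ^ 2)⁻¹)]
  have h0 := ne_of_gt hDt
  set Ex := Real.exp (-k * (T - t)) with hEx
  set D := ψ + (a + k) / σ ^ 2 + ((k - a) / σ ^ 2 - ψ) * Ex with hDdef
  field_simp [h0]
  rw [hDdef]
  field_simp
  ring

theorem Phi_deriv_in_psi
    (T a b σ γ : ℝ) (ha : 0 < a) (hb : 0 < b) (hσ : 0 < σ) (hγ : 0 ≤ γ) :
    (∀ t ≤ T, ∀ ψ > (0 : ℝ),
      HasDerivAt (fun p => Phi a b σ p γ T t)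
        (Real.exp (-∫ u in t..T, (σ ^ 2 * Phi a b σ ψ γ T u + a))) ψ) ∧
    (∀ t ≤ T, ∀ ψ ≥ (0 : ℝ),
      HasDerivWithinAt (fun p => Phi a b σ p γ T t)
        (Real.exp (-∫ u in t..T, (σ ^ 2 * Phi a b σ ψ γ T u + a)))
        (Set.Ici ψ) ψ) := by
  exact ⟨fun t ht ψ hψ => Phi_main T a b σ γ ha hb hσ hγ t ht ψ hψ.le,
    fun t ht ψ hψ => (Phi_main T a b σ γ ha hb hσ hγ t ht ψ hψ).hasDerivWithinAt⟩
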